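/- arXiv:2307.14904 — 4 statements merged into one kernel-verified Lean document; each statement's English description precedes it below -/
import Mathlib

section
/- For the Airy system D(x) = [[0,1],[x,0]], any function of the form W₁(x) = Tr(D(x)·M(x)) where M'(x) = [D(x), M(x)] satisfies the third-order ODE (1/2)·W₁'''(x) = 2x·W₁'(x) − W₁(x). -/
open Matrix

/-- For the Airy system D(x) = [[0,1],[x,0]], any W₁(x) = Tr(D(x)·M(x)) with
M'(x) = [D(x), M(x)] satisfies (1/2)·W₁'''(x) = 2x·W₁'(x) - W₁(x). -/
theorem airy_ODE_W1
    (M : ℝ → Matrix (Fin 2) (Fin 2) ℂ)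
    (hM : ∀ x : ℝ, ∀ i j, HasDerivAt (fun t => M t i j)
      ((!![0, 1; (x : ℂ), 0] * M x - M x * !![0, 1; (x : ℂ), 0]) i j) x)
    (W₁ : ℝ → ℂ)
    (hW₁ : ∀ x : ℝ, W₁ x = (!![0, 1; (x : ℂ), 0] * M x).trace) :
    ∀ x : ℝ, (1 / 2 : ℂ) * iteratedDeriv 3 W₁ x = 2 * (x : ℂ) * deriv W₁ x - W₁ x := by
  -- entry-wise ODEs
  have ha : ∀ y : ℝ, HasDerivAt (fun t => M t 0 0) (M y 1 0 - (y : ℂ) * M y 0 1) y := by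
    intro y
    simpa [Matrix.mul_apply, Matrix.vecMul, dotProduct, Matrix.vecHead, Matrix.vecTail, Fin.sum_univ_two, mul_comm] using hM y 0 0
  have hb : ∀ y : ℝ, HasDerivAt (fun t => M t 0 1) (M y 1 1 - M y 0 0) y := by
    intro y
    simpa [Matrix.mul_apply, Matrix.vecMul, dotProduct, Matrix.vecHead, Matrix.vecTail, Fin.sum_univ_two, mul_comm] using hM y 0 1
  have hc : ∀ y : ℝ, HasDerivAt (fun t => M t 1 0)
      ((y : ℂ) * M y 0 0 - (y : ℂ) * M y 1 1) y := by
    intro y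
    simpa [Matrix.mul_apply, Matrix.vecMul, dotProduct, Matrix.vecHead, Matrix.vecTail, Fin.sum_univ_two, mul_comm] using hM y 1 0
  have hd : ∀ y : ℝ, HasDerivAt (fun t => M t 1 1) ((y : ℂ) * M y 0 1 - M y 1 0) y := by
    intro y
    simpa [Matrix.mul_apply, Matrix.vecMul, dotProduct, Matrix.vecHead, Matrix.vecTail, Fin.sum_univ_two, mul_comm] using hM y 1 1
  -- W₁ as a concrete function
  have hWfun : W₁ = fun t : ℝ => M t 1 0 + (t : ℂ) * M t 0 1 := by
    funext t
    simp [hW₁ t, Matrix.trace_fin_two, Matrix.mul_apply, Matrix.vecMul, dotProduct, Matrix.vecHead, Matrix.vecTail, Fin.sum_univ_two, mul_comm]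
  -- first derivative of W₁ is b
  have hW' : ∀ y : ℝ, HasDerivAt W₁ (M y 0 1) y := by
    intro y
    rw [hWfun]
    have hid : HasDerivAt (fun t : ℝ => (t : ℂ)) 1 y := by
      simpa using (hasDerivAt_id y).ofReal_comp
    have := (hc y).add (hid.mul (hb y))
    exact this.congr_deriv (by ring)
  have hderiv1 : deriv W₁ = fun y : ℝ => M y 0 1 := funext fun y => (hW' y).deriv
  have hderiv2 : deriv (deriv W₁) = fun y : ℝ => M y 1 1 - M y 0 0 := by
    rw [hderiv1]
    exact funext fun y => (hb y).deriv
  intro x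
  have h3 : HasDerivAt (fun y : ℝ => M y 1 1 - M y 0 0)
      (((x : ℂ) * M x 0 1 - M x 1 0) - (M x 1 0 - (x : ℂ) * M x 0 1)) x :=
    (hd x).sub (ha x)
  have h3' : deriv (deriv (deriv W₁)) x
      = ((x : ℂ) * M x 0 1 - M x 1 0) - (M x 1 0 - (x : ℂ) * M x 0 1) := by
    rw [hderiv2]
    exact h3.deriv
  have hit : iteratedDeriv 3 W₁ x = deriv (deriv (deriv W₁)) x := by
    simp [iteratedDeriv_succ, iteratedDeriv_zero]
  rw [hit, h3', hderiv1, hWfun]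
  ring
end

section
/- For the Hermite/GUE system with D(x) = [[x,−1],[N,0]], the matrices D_k defined by D₀ = D, D_{k+1} = D_k' + [D_k, D] satisfy the linear relation D₄(x) = (x² − 4N)·D₂(x) + x·D₁(x) − D₀(x) for all x. -/
open Matrix

/-- For the Hermite/GUE system D(x) = [[x,-1],[N,0]], the matrices D_k defined by
D₀ = D, D_{k+1} = D_k' + [D_k, D] satisfy D₄(x) = (x² - 4N)·D₂(x) + x·D₁(x) - D₀(x). -/
theorem hermite_Dk_linear_relation
    (N : ℂ) (Dk : ℕ → ℂ → Matrix (Fin 2) (Fin 2) ℂ)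
    (hDk0 : Dk 0 = fun x => !![x, -1; N, 0])
    (hDkrec : ∀ k x i j,
      HasDerivAt (fun t => Dk k t i j)
        ((Dk (k + 1) x - (Dk k x * !![x, -1; N, 0] - !![x, -1; N, 0] * Dk k x)) i j) x) :
    ∀ x, Dk 4 x = (x ^ 2 - 4 * N) • Dk 2 x + x • Dk 1 x - Dk 0 x := by
  have h1 : ∀ x, Dk 1 x = !![1, 0; 0, 0] := by
    intro x
    ext i j
    have h := hDkrec 0 x i j
    simp only [hDk0] at h
    fin_cases i <;> fin_cases j <;>
      simp [Matrix.mul_apply, Fin.sum_univ_two, Matrix.sub_apply] at h ⊢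
    · exact h.unique (hasDerivAt_id x)
    · exact h.unique (hasDerivAt_const x (-1 : ℂ))
    · exact h.unique (hasDerivAt_const x N)
    · exact h.unique (hasDerivAt_const x (0 : ℂ))
  have h2 : ∀ x, Dk 2 x = !![0, -1; -N, 0] := by
    intro x
    ext i j
    have h := hDkrec 1 x i j
    simp only [h1] at h
    fin_cases i <;> fin_cases j <;>
      simp [Matrix.mul_apply, Fin.sum_univ_two, Matrix.sub_apply] at h ⊢ <;>
      · have hu := h.unique (hasDerivAt_const x _)
        linear_combination hu
  have h3 : ∀ x, Dk 3 x = !![-2 * N, x; -N * x, 2 * N] := by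
    intro x
    ext i j
    have h := hDkrec 2 x i j
    simp only [h2] at h
    fin_cases i <;> fin_cases j <;>
      simp [Matrix.mul_apply, Fin.sum_univ_two, Matrix.sub_apply] at h ⊢ <;>
      · have hu := h.unique (hasDerivAt_const x _)
        linear_combination hu
  have h4 : ∀ x, Dk 4 x = !![0, 1 + 4 * N - x ^ 2; 4 * N ^ 2 - N * x ^ 2 - N, 0] := by
    intro x
    ext i j
    have h := hDkrec 3 x i j
    simp only [h3] at h
    fin_cases i <;> fin_cases j <;>
      simp [Matrix.mul_apply, Fin.sum_univ_two, Matrix.sub_apply] at h ⊢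
    · have hu := h.unique (hasDerivAt_const x (-(2 * N)))
      linear_combination hu
    · have hu := h.unique (hasDerivAt_id x)
      linear_combination hu
    · have hd : HasDerivAt (fun t : ℂ => -(N * t)) (-N) x := by
        simpa using HasDerivAt.fun_neg (HasDerivAt.const_mul N (hasDerivAt_id x))
      have hu := h.unique hd
      linear_combination hu
    · have hu := h.unique (hasDerivAt_const x (2 * N))
      linear_combination hu
  intro x
  rw [h4, h2, h1, hDk0]
  ext i j
  fin_cases i <;> fin_cases j <;>
    simp [Matrix.smul_apply, Matrix.sub_apply, Matrix.add_apply] <;> ring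
end

section
/- For the Hermite/GUE system D(x) = [[x,−1],[N,0]], any function W₁(x) = Tr(D(x)·M(x)) with M'(x) = [D(x), M(x)] satisfies the fourth-order ODE W₁'''' = (x² − 4N)·W₁'' + x·W₁' − W₁. -/
open Matrix

/-- For the Hermite/GUE system D(x) = [[x,-1],[N,0]], any W₁(x) = Tr(D(x)·M(x)) with
M'(x) = [D(x), M(x)] satisfies W₁'''' = (x² - 4N)·W₁'' + x·W₁' - W₁. -/
theorem hermite_ODE_W1
    (N : ℂ) (M : ℝ → Matrix (Fin 2) (Fin 2) ℂ)
    (hM : ∀ x : ℝ, ∀ i j, HasDerivAt (fun t => M t i j)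
      ((!![(x : ℂ), -1; N, 0] * M x - M x * !![(x : ℂ), -1; N, 0]) i j) x)
    (W₁ : ℝ → ℂ)
    (hW₁ : ∀ x : ℝ, W₁ x = (!![(x : ℂ), -1; N, 0] * M x).trace) :
    ∀ x : ℝ, iteratedDeriv 4 W₁ x =
      ((x : ℂ) ^ 2 - 4 * N) * iteratedDeriv 2 W₁ x + (x : ℂ) * deriv W₁ x - W₁ x := by
  -- entrywise derivative facts
  have ha : ∀ x : ℝ, HasDerivAt (fun t => M t 0 0) (-(M x 1 0) - N * M x 0 1) x := by
    intro x
    have h := hM x 0 0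
    have he : ((!![(x : ℂ), -1; N, 0] * M x - M x * !![(x : ℂ), -1; N, 0]) 0 0)
        = -(M x 1 0) - N * M x 0 1 := by
      simp [Matrix.mul_apply, Matrix.vecMul, dotProduct, Matrix.vecHead, Matrix.vecTail, Fin.sum_univ_two]
      ring
    rwa [he] at h
  have hb : ∀ x : ℝ, HasDerivAt (fun t => M t 0 1)
      ((x : ℂ) * M x 0 1 - M x 1 1 + M x 0 0) x := by
    intro x
    have h := hM x 0 1
    have he : ((!![(x : ℂ), -1; N, 0] * M x - M x * !![(x : ℂ), -1; N, 0]) 0 1)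
        = (x : ℂ) * M x 0 1 - M x 1 1 + M x 0 0 := by
      simp [Matrix.mul_apply, Matrix.vecMul, dotProduct, Matrix.vecHead, Matrix.vecTail, Fin.sum_univ_two]
      ring
    rwa [he] at h
  have hc : ∀ x : ℝ, HasDerivAt (fun t => M t 1 0)
      (N * M x 0 0 - (x : ℂ) * M x 1 0 - N * M x 1 1) x := by
    intro x
    have h := hM x 1 0
    have he : ((!![(x : ℂ), -1; N, 0] * M x - M x * !![(x : ℂ), -1; N, 0]) 1 0)
        = N * M x 0 0 - (x : ℂ) * M x 1 0 - N * M x 1 1 := by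
      simp [Matrix.mul_apply, Matrix.vecMul, dotProduct, Matrix.vecHead, Matrix.vecTail, Fin.sum_univ_two]
      ring
    rwa [he] at h
  have hd : ∀ x : ℝ, HasDerivAt (fun t => M t 1 1)
      (N * M x 0 1 + M x 1 0) x := by
    intro x
    have h := hM x 1 1
    have he : ((!![(x : ℂ), -1; N, 0] * M x - M x * !![(x : ℂ), -1; N, 0]) 1 1)
        = N * M x 0 1 + M x 1 0 := by
      simp [Matrix.mul_apply, Matrix.vecMul, dotProduct, Matrix.vecHead, Matrix.vecTail, Fin.sum_univ_two]
    rwa [he] at h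
  -- W₁ in terms of entries
  have hWfun : W₁ = fun x : ℝ => (x : ℂ) * M x 0 0 - M x 1 0 + N * M x 0 1 := by
    funext x
    rw [hW₁ x]
    simp [Matrix.trace_fin_two, Matrix.mul_apply, Matrix.vecMul, dotProduct, Matrix.vecHead, Matrix.vecTail, Fin.sum_univ_two]
    ring
  have hox : ∀ x : ℝ, HasDerivAt (fun t : ℝ => (t : ℂ)) 1 x := fun x =>
    Complex.ofRealCLM.hasDerivAt
  -- first derivative: W₁' = a
  have hW' : ∀ x : ℝ, HasDerivAt W₁ (M x 0 0) x := by
    intro x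
    rw [hWfun]
    have h := (((hox x).mul (ha x)).sub (hc x)).add ((hb x).const_mul N)
    convert h using 1
    · rfl
    · rfl
    · ring
  have hdW : deriv W₁ = fun x : ℝ => M x 0 0 := funext fun x => (hW' x).deriv
  -- second derivative
  have hdW2 : deriv (fun x : ℝ => M x 0 0)
      = fun x : ℝ => -(M x 1 0) - N * M x 0 1 := funext fun x => (ha x).deriv
  -- third derivative
  have hW3 : ∀ x : ℝ, HasDerivAt (fun x : ℝ => -(M x 1 0) - N * M x 0 1)
      (-2 * N * M x 0 0 + (x : ℂ) * M x 1 0 + 2 * N * M x 1 1 - N * (x : ℂ) * M x 0 1) x := by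
    intro x
    have h := ((hc x).neg).sub ((hb x).const_mul N)
    convert h using 1
    · rfl
    · rfl
    · ring
  have hdW3 : deriv (fun x : ℝ => -(M x 1 0) - N * M x 0 1)
      = fun x : ℝ => -2 * N * M x 0 0 + (x : ℂ) * M x 1 0 + 2 * N * M x 1 1
          - N * (x : ℂ) * M x 0 1 := funext fun x => (hW3 x).deriv
  -- fourth derivative
  have hW4 : ∀ x : ℝ, HasDerivAt (fun x : ℝ => -2 * N * M x 0 0 + (x : ℂ) * M x 1 0
        + 2 * N * M x 1 1 - N * (x : ℂ) * M x 0 1)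
      (((x : ℂ) ^ 2 - 4 * N) * (-(M x 1 0) - N * M x 0 1)
        + (x : ℂ) * M x 0 0 - ((x : ℂ) * M x 0 0 - M x 1 0 + N * M x 0 1)) x := by
    intro x
    have h := ((((ha x).const_mul (-2 * N)).add ((hox x).mul (hc x))).add
        ((hd x).const_mul (2 * N))).sub
        ((((hox x).const_mul N).mul (hb x)))
    convert h using 1
    · rfl
    · rfl
    · ring
  intro x
  have h4 : iteratedDeriv 4 W₁ = deriv (deriv (deriv (deriv W₁))) := by
    simp [iteratedDeriv_succ, iteratedDeriv_zero]
  have h2 : iteratedDeriv 2 W₁ = deriv (deriv W₁) := by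
    simp [iteratedDeriv_succ, iteratedDeriv_zero]
  rw [h4, h2, hdW, hdW2, hdW3]
  rw [(hW4 x).deriv]
  rw [hWfun]
end

section
/- If W(x) = −x/2 + Σ_{k≥0} t_{2k}·x^{−2k−1} is a formal Laurent series solution of W''' + (4N − x²)·W' + x·W = 0, then the coefficients satisfy the recursion t_{2k} = 2N·(2k−1)/(k+1)·t_{2k−2} + (1/2)·(2k−3)(2k−2)(2k−1)/(k+1)·t_{2k−4} for k ≥ 2. -/
/-- Let W(x) = -x/2 + Σ_{k≥0} t_{2k} x^{-2k-1} be a formal Laurent series, with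
Laurent coefficients c : ℤ → ℂ (so c 1 = -1/2, c (-(2k+1)) = t_{2k}, and all
other coefficients vanish).  If the ODE W''' + (4N - x²)·W' + x·W = 0 holds
coefficient-wise, i.e.
  (n+1)(n+2)(n+3)·c(n+3) + 4N(n+1)·c(n+1) + (2-n)·c(n-1) = 0  for all n ∈ ℤ,
then the moments t_{2k} (here `a k` denotes t_{2k}) satisfy the recursion
t_{2k} = 2N(2k-1)/(k+1)·t_{2k-2} + (1/2)(2k-3)(2k-2)(2k-1)/(k+1)·t_{2k-4}
for k ≥ 2. -/
theorem GUE_moment_recursion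
    (N : ℂ) (a : ℕ → ℂ) (c : ℤ → ℂ)
    (hc1 : c 1 = -(1 / 2))
    (hca : ∀ k : ℕ, c (-(2 * (k : ℤ) + 1)) = a k)
    (hc0 : ∀ n : ℤ, n ≠ 1 → (∀ k : ℕ, n ≠ -(2 * (k : ℤ) + 1)) → c n = 0)
    (hODE : ∀ n : ℤ,
      ((n : ℂ) + 1) * ((n : ℂ) + 2) * ((n : ℂ) + 3) * c (n + 3)
        + 4 * N * ((n : ℂ) + 1) * c (n + 1) + (2 - (n : ℂ)) * c (n - 1) = 0) :
    ∀ k : ℕ, 2 ≤ k →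
      a k = 2 * N * (2 * (k : ℂ) - 1) / ((k : ℂ) + 1) * a (k - 1)
        + (1 / 2) * ((2 * (k : ℂ) - 3) * (2 * (k : ℂ) - 2) * (2 * (k : ℂ) - 1))
            / ((k : ℂ) + 1) * a (k - 2) := by
  intro k hk
  have h := hODE (-(2 * (k : ℤ)))
  have e1 : (-(2 * (k : ℤ)) + 3) = -(2 * ((k - 2 : ℕ) : ℤ) + 1) := by
    have : ((k - 2 : ℕ) : ℤ) = (k : ℤ) - 2 := by omega
    rw [this]; ring
  have e2 : (-(2 * (k : ℤ)) + 1) = -(2 * ((k - 1 : ℕ) : ℤ) + 1) := by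
    have : ((k - 1 : ℕ) : ℤ) = (k : ℤ) - 1 := by omega
    rw [this]; ring
  have e3 : (-(2 * (k : ℤ)) - 1) = -(2 * (k : ℤ) + 1) := by ring
  rw [e1, e2, e3, hca, hca, hca] at h
  have hk1 : ((k : ℂ) + 1) ≠ 0 := Nat.cast_add_one_ne_zero k
  have hcast : ((-(2 * (k : ℤ)) : ℤ) : ℂ) = -(2 * (k : ℂ)) := by push_cast; ring
  rw [hcast] at h
  field_simp
  linear_combination h / 2
end
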